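/- Let S be a set of n×n complex matrices, P a p×n matrix, and Q an n×q matrix. Let k be the smallest positive integer such that P·A₁⋯A_k·Q ≠ 0 for some A₁,…,A_k ∈ S. Then for any A₁,…,A_k ∈ S, the rank of P·A₁⋯A_k·Q is at most n/k. -/
import Mathlib

open Module

-- key sublemma
lemma auxlem {n p : ℕ} (f : (Fin n → ℂ) →ₗ[ℂ] (Fin p → ℂ))
    (D D' : Submodule ℂ (Fin n → ℂ)) (h1 : D' ≤ D) (h2 : D' ≤ LinearMap.ker f) :
    finrank ℂ D' + finrank ℂ (Submodule.map f D) ≤ finrank ℂ D := by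
  set f' := f ∘ₗ D.subtype with hf'
  have hrange : LinearMap.range f' = Submodule.map f D := by
    rw [hf', LinearMap.range_comp, Submodule.range_subtype]
  have rn := LinearMap.finrank_range_add_finrank_ker f'
  have hinj : finrank ℂ D' ≤ finrank ℂ (LinearMap.ker f') := by
    let e : D' →ₗ[ℂ] (LinearMap.ker f') :=
      { toFun := fun x => ⟨⟨x.1, h1 x.2⟩, h2 x.2⟩
        map_add' := fun a b => rfl
        map_smul' := fun c a => rfl }
    have he : Function.Injective e := by
      intro a b hab
      have : ((e a : D) : Fin n → ℂ) = ((e b : D) : Fin n → ℂ) := by rw [hab]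
      exact Subtype.ext this
    exact LinearMap.finrank_le_finrank_of_injective he
  calc finrank ℂ D' + finrank ℂ (Submodule.map f D)
      ≤ finrank ℂ (LinearMap.ker f') + finrank ℂ (LinearMap.range f') := by
        rw [hrange]; omega
    _ = finrank ℂ D := by rw [add_comm]; exact rn

theorem stmt0 (n p q : ℕ) (S : Set (Matrix (Fin n) (Fin n) ℂ))
    (P : Matrix (Fin p) (Fin n) ℂ) (Q : Matrix (Fin n) (Fin q) ℂ)
    (k : ℕ) (hk : 0 < k)
    (hex : ∃ l : List (Matrix (Fin n) (Fin n) ℂ),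
      (∀ A ∈ l, A ∈ S) ∧ l.length = k ∧ P * l.prod * Q ≠ 0)
    (hmin : ∀ l : List (Matrix (Fin n) (Fin n) ℂ),
      (∀ A ∈ l, A ∈ S) → 0 < l.length → l.length < k → P * l.prod * Q = 0) :
    ∀ l : List (Matrix (Fin n) (Fin n) ℂ), (∀ A ∈ l, A ∈ S) → l.length = k →
      ((P * l.prod * Q).rank : ℝ) ≤ (n : ℝ) / (k : ℝ) := by
  intro l hl hlen
  set r := (P * l.prod * Q).rank with hr
  set Y : ℕ → Matrix (Fin p) (Fin n) ℂ := fun i => P * (l.take i).prod with hY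
  set X : ℕ → Matrix (Fin n) (Fin q) ℂ := fun i => (l.drop i).prod * Q with hX
  set C : ℕ → Submodule ℂ (Fin n → ℂ) := fun i => LinearMap.range (X i).mulVecLin with hC
  set D : ℕ → Submodule ℂ (Fin n → ℂ) := fun i => ⨆ j ∈ Finset.Icc i k, C j with hD
  have hYX : ∀ i, Y i * X i = P * l.prod * Q := by
    intro i
    simp only [hY, hX]
    rw [← Matrix.mul_assoc, Matrix.mul_assoc P, List.prod_take_mul_prod_drop]
  have hzero : ∀ i j, 1 ≤ i → i < j → j ≤ k → Y i * X j = 0 := by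
    intro i j h1 h2 h3
    have hm := hmin (l.take i ++ l.drop j)
      (by intro A hA
          rcases List.mem_append.mp hA with h | h
          · exact hl A ((List.take_sublist _ _).subset h)
          · exact hl A ((List.drop_sublist _ _).subset h))
      (by simp [hlen]; omega) (by simp [hlen]; omega)
    rw [List.prod_append] at hm
    calc Y i * X j = P * ((l.take i).prod * (l.drop j).prod) * Q := by
          simp only [hY, hX]; rw [← Matrix.mul_assoc, Matrix.mul_assoc P]
      _ = 0 := hm
  have hCD : ∀ i, i ≤ k → C i ≤ D i := by
    intro i hi
    exact le_iSup₂ (f := fun j (_ : j ∈ Finset.Icc i k) => C j) i (by simp [hi])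
  have hmapr : ∀ i, 1 ≤ i → i ≤ k →
      r ≤ Module.finrank ℂ (Submodule.map (Y i).mulVecLin (D i)) := by
    intro i h1 h2
    have hmap : Submodule.map (Y i).mulVecLin (C i) =
        LinearMap.range ((Y i * X i).mulVecLin) := by
      rw [Matrix.mulVecLin_mul (Y i) (X i),
        LinearMap.range_comp ((X i).mulVecLin) ((Y i).mulVecLin)]
    have : r = Module.finrank ℂ (Submodule.map (Y i).mulVecLin (C i)) := by
      rw [hmap, hYX i]; rfl
    rw [this]
    exact Submodule.finrank_mono (Submodule.map_mono (hCD i h2))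
  have hDle : ∀ i, D (i + 1) ≤ D i := by
    intro i
    apply iSup₂_le
    intro j hj
    exact le_iSup₂ (f := fun j (_ : j ∈ Finset.Icc i k) => C j) j
      (by simp_all; omega)
  have hDker : ∀ i, 1 ≤ i → D (i + 1) ≤ LinearMap.ker (Y i).mulVecLin := by
    intro i h1
    apply iSup₂_le
    intro j hj
    simp only [Finset.mem_Icc] at hj
    apply LinearMap.range_le_ker_iff.mpr
    rw [← Matrix.mulVecLin_mul, hzero i j h1 (by omega) hj.2]
    exact Matrix.mulVecLin_zero
  have claim : ∀ d, d < k → (d + 1) * r ≤ Module.finrank ℂ (D (k - d)) := by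
    intro d
    induction d with
    | zero =>
      intro _
      have h1 := hmapr k hk le_rfl
      have h2 := Submodule.finrank_map_le (Y k).mulVecLin (D k)
      simpa using le_trans h1 h2
    | succ d ih =>
      intro hd
      have ih' := ih (by omega)
      set i := k - (d + 1) with hi
      have hik : i + 1 = k - d := by omega
      have h1 : 1 ≤ i := by omega
      have haux := auxlem (Y i).mulVecLin (D i) (D (i + 1)) (hDle i) (hDker i h1)
      have h2 := hmapr i h1 (by omega)
      rw [hik] at haux
      have hmul : (d + 1 + 1) * r = (d + 1) * r + r := by ring
      omega
  have hfin : k * r ≤ n := by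
    have h1 := claim (k - 1) (by omega)
    have h2 : k - (k - 1) = 1 := by omega
    rw [h2] at h1
    have h3 : Module.finrank ℂ (D 1) ≤ n := by
      have := Submodule.finrank_le (D 1)
      rwa [Module.finrank_fin_fun] at this
    have h4 : k - 1 + 1 = k := by omega
    rw [h4] at h1
    omega
  rw [le_div_iff₀ (by exact_mod_cast hk)]
  calc (r : ℝ) * k = (k * r : ℕ) := by push_cast; ring
    _ ≤ n := by exact_mod_cast hfin
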